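/- Let agents have {−1,0,c}-additive valuations, c a positive integer. Let Y be a leximin allocation for the auxiliary instance in which all n agents share agent i's valuation v_i, chosen to be dominating (not dominated by any other leximin allocation for that instance), and suppose Y is sorted so that agent n has minimal utility. Let N' = {j : |Y^c_j| = |Y^c_n| + 1} and let ℓ be the number of items agent i values at −1. Then |Y^{−1}_n| = max{⌈(ℓ − c|N'|)/n⌉, 0}, and hence the maxmin share of agent i satisfies MMS_i ≤ c|Y^c_n| − max{⌈(ℓ − c|N'|)/n⌉, 0}. -/

import Mathlib

open Finset

/-- Additive utility of a bundle given per-item values. -/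
def util {α : Type*} [DecidableEq α] (w : α → ℤ) (S : Finset α) : ℤ := ∑ o ∈ S, w o

/-- A complete allocation: bundles are pairwise disjoint and cover all items. -/
def CompleteAlloc {α : Type*} [Fintype α] [DecidableEq α] {n : ℕ}
    (X : Fin n → Finset α) : Prop :=
  (∀ i j : Fin n, i ≠ j → Disjoint (X i) (X j)) ∧ Finset.univ.biUnion X = Finset.univ

/-- The items of `Y i` valued at `c` by the common valuation `w`. -/
def cPart {α : Type*} [DecidableEq α] {n : ℕ} (w : α → ℤ) (c : ℕ)
    (Y : Fin n → Finset α) (i : Fin n) : Finset α :=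
  (Y i).filter fun o => w o = (c : ℤ)

/-- The items of `Y i` valued at `-1` by the common valuation `w`. -/
def mPart {α : Type*} [DecidableEq α] {n : ℕ} (w : α → ℤ)
    (Y : Fin n → Finset α) (i : Fin n) : Finset α :=
  (Y i).filter fun o => w o = -1

/-- The ascending-sorted utility vector, all agents sharing valuation `w`. -/
noncomputable def sUtil {α : Type*} [Fintype α] [DecidableEq α] {n : ℕ}
    (w : α → ℤ) (Y : Fin n → Finset α) : List ℤ :=
  Multiset.sort (Multiset.map (fun i => util w (Y i)) Finset.univ.val) (· ≤ ·)

/-- Leximin for the auxiliary instance in which all agents share valuation `w`. -/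
def LeximinAux {α : Type*} [Fintype α] [DecidableEq α] {n : ℕ}
    (w : α → ℤ) (Y : Fin n → Finset α) : Prop :=
  CompleteAlloc Y ∧ ∀ Z : Fin n → Finset α, CompleteAlloc Z →
    ¬ List.Lex (· < ·) (sUtil w Y) (sUtil w Z)

/-- The ascending-sorted utility vector of the `c`-part allocation `Y^c`. -/
noncomputable def sC {α : Type*} [Fintype α] [DecidableEq α] {n : ℕ}
    (w : α → ℤ) (c : ℕ) (Y : Fin n → Finset α) : List ℤ :=
  Multiset.sort
    (Multiset.map (fun i => (c : ℤ) * (cPart w c Y i).card) Finset.univ.val) (· ≤ ·)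

/-- The (unsorted) utility vector of the `c`-part allocation `Y^c`. -/
def vecC {α : Type*} [DecidableEq α] {n : ℕ}
    (w : α → ℤ) (c : ℕ) (Y : Fin n → Finset α) : List ℤ :=
  List.ofFn fun i => (c : ℤ) * (cPart w c Y i).card

/-- The (unsorted) full utility vector. -/
def uVec {α : Type*} [DecidableEq α] {n : ℕ}
    (w : α → ℤ) (Y : Fin n → Finset α) : List ℤ :=
  List.ofFn fun i => util w (Y i)

/-- `Z` dominates `Y` (Definition of domination for comparing leximin allocations). -/
noncomputable def Dominates {α : Type*} [Fintype α] [DecidableEq α] {n : ℕ}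
    (w : α → ℤ) (c : ℕ) (Z Y : Fin n → Finset α) : Prop :=
  List.Lex (· < ·) (sC w c Y) (sC w c Z) ∨
  (sC w c Z = sC w c Y ∧ List.Lex (· < ·) (vecC w c Y) (vecC w c Z)) ∨
  (vecC w c Z = vecC w c Y ∧ List.Lex (· < ·) (uVec w Y) (uVec w Z))

section Helpers
open Finset

set_option linter.unusedSectionVars false
set_option linter.unusedVariables false

/-- Sorted-lists lex comparison via counts. -/
lemma lex_of_counts : ∀ (s t : List ℤ), s.Pairwise (· ≤ ·) → t.Pairwise (· ≤ ·) →
    s.length = t.length →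
    ∀ x : ℤ, (∀ z, z < x → s.count z = t.count z) → t.count x < s.count x →
    List.Lex (· < ·) s t := by
  intro s
  induction s with
  | nil => intro t _ _ hlen x _ hcx; simp at hcx
  | cons a s ih =>
    intro t hs ht hlen x hlow hcx
    match t with
    | [] => simp at hlen
    | b :: t =>
      rcases lt_trichotomy a b with hab | hab | hab
      · exact List.Lex.rel hab
      · subst hab
        apply List.Lex.cons
        apply ih t hs.of_cons ht.of_cons (by simpa using hlen) x
        · intro z hz
          have := hlow z hz
          simp only [List.count_cons] at this
          omega
        · have := hcx
          simp only [List.count_cons] at this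
          omega
      · exfalso
        have hsall : ∀ z ∈ a :: s, a ≤ z := by
          intro z hz
          rcases List.mem_cons.mp hz with h | h
          · omega
          · exact List.rel_of_pairwise_cons hs h
        rcases lt_trichotomy b x with hbx | hbx | hbx
        · have h1 := hlow b hbx
          have h2 : (a :: s).count b = 0 := by
            rw [List.count_eq_zero]
            intro hb
            have := hsall b hb; omega
          rw [h2] at h1
          have : 0 < (b :: t).count b := by simp [List.count_cons]
          omega
        · subst hbx
          have h2 : (a :: s).count b = 0 := by
            rw [List.count_eq_zero]
            intro hb
            have := hsall b hb; omega
          omega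
        · have hxs : x ∈ a :: s := by
            rw [← List.count_pos_iff]
            omega
          have := hsall x hxs
          omega

lemma count_sort (M : Multiset ℤ) (z : ℤ) :
    (Multiset.sort M (· ≤ ·)).count z = M.count z := by
  have h := Multiset.sort_eq M (· ≤ ·)
  rw [← Multiset.coe_count, h]

lemma ml_lex (M M' : Multiset ℤ) (hcard : Multiset.card M = Multiset.card M')
    (x : ℤ) (hlow : ∀ z, z < x → M.count z = M'.count z)
    (hx : M'.count x < M.count x) :
    List.Lex (· < ·) (Multiset.sort M (· ≤ ·)) (Multiset.sort M' (· ≤ ·)) := by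
  apply lex_of_counts _ _ (Multiset.pairwise_sort M _) (Multiset.pairwise_sort M' _)
  · rw [Multiset.length_sort, Multiset.length_sort, hcard]
  · intro z hz; rw [count_sort, count_sort]; exact hlow z hz
  · rw [count_sort, count_sort]; exact hx

lemma count_map_univ {n : ℕ} (f : Fin n → ℤ) (z : ℤ) :
    Multiset.count z (Multiset.map f Finset.univ.val)
      = (Finset.univ.filter fun i => f i = z).card := by
  rw [Multiset.count_map]
  rw [Finset.card]
  congr 1
  rw [Finset.filter_val]
  congr 1
  ext i
  exact eq_comm

lemma exchange_lex {n : ℕ} (f f' : Fin n → ℤ) (j r : Fin n) (hjr : j ≠ r) (x : ℤ)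
    (hfj : f j = x) (hfr : x ≤ f r) (h'j : x < f' j) (h'r : x < f' r)
    (hoth : ∀ i, i ≠ j → i ≠ r → f' i = f i) :
    List.Lex (· < ·) (Multiset.sort (Multiset.map f Finset.univ.val) (· ≤ ·))
      (Multiset.sort (Multiset.map f' Finset.univ.val) (· ≤ ·)) := by
  apply ml_lex _ _ (by simp) x
  · intro z hz
    rw [count_map_univ, count_map_univ]
    congr 1
    apply Finset.filter_congr
    intro i _
    by_cases hij : i = j
    · subst hij; constructor <;> intro h <;> omega
    · by_cases hir : i = r
      · subst hir; constructor <;> intro h <;> omega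
      · rw [hoth i hij hir]
  · rw [count_map_univ, count_map_univ]
    have hjmem : j ∈ Finset.univ.filter fun i => f i = x := by
      simp [hfj]
    have hsub : (Finset.univ.filter fun i => f' i = x) ⊆
        (Finset.univ.filter fun i => f i = x).erase j := by
      intro i hi
      simp only [Finset.mem_filter, Finset.mem_univ, true_and] at hi
      have hij : i ≠ j := by rintro rfl; omega
      have hir : i ≠ r := by rintro rfl; omega
      rw [Finset.mem_erase]
      refine ⟨hij, ?_⟩
      simp only [Finset.mem_filter, Finset.mem_univ, true_and]
      rw [← hoth i hij hir]; exact hi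
    calc (Finset.univ.filter fun i => f' i = x).card
        ≤ ((Finset.univ.filter fun i => f i = x).erase j).card := Finset.card_le_card hsub
      _ < (Finset.univ.filter fun i => f i = x).card := by
          rw [Finset.card_erase_of_mem hjmem]
          have : 0 < (Finset.univ.filter fun i => f i = x).card :=
            Finset.card_pos.mpr ⟨j, hjmem⟩
          omega

lemma min_lex {n : ℕ} (f f' : Fin n → ℤ) (x : ℤ) (j : Fin n) (hfj : f j = x)
    (hall : ∀ i, x ≤ f i) (hall' : ∀ i, x < f' i) :
    List.Lex (· < ·) (Multiset.sort (Multiset.map f Finset.univ.val) (· ≤ ·))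
      (Multiset.sort (Multiset.map f' Finset.univ.val) (· ≤ ·)) := by
  apply ml_lex _ _ (by simp) x
  · intro z hz
    rw [count_map_univ, count_map_univ]
    have h1 : (Finset.univ.filter fun i => f i = z) = ∅ := by
      apply Finset.filter_false_of_mem; intro i _; have := hall i; omega
    have h2 : (Finset.univ.filter fun i => f' i = z) = ∅ := by
      apply Finset.filter_false_of_mem; intro i _; have := hall' i; omega
    rw [h1, h2]
  · rw [count_map_univ, count_map_univ]
    have h2 : (Finset.univ.filter fun i => f' i = x) = ∅ := by
      apply Finset.filter_false_of_mem; intro i _; have := hall' i; omega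
    rw [h2]
    exact Finset.card_pos.mpr ⟨j, by simp [hfj]⟩

lemma lex_ofFn {n : ℕ} (f f' : Fin n → ℤ) (j : Fin n)
    (hlt : f j < f' j) (hagree : ∀ i : Fin n, (i : ℕ) < (j : ℕ) → f i = f' i) :
    List.Lex (· < ·) (List.ofFn f) (List.ofFn f') := by
  have hlen : (j : ℕ) < (List.ofFn f).length := by simp [j.isLt]
  have hlen' : (j : ℕ) < (List.ofFn f').length := by simp [j.isLt]
  have h1 : List.ofFn f = (List.ofFn f).take j ++ f j :: (List.ofFn f).drop (j + 1) := by
    conv_lhs => rw [← List.take_append_drop (j : ℕ) (List.ofFn f)]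
    congr 1
    rw [List.drop_eq_getElem_cons hlen]
    congr 1
    simp
  have h2 : List.ofFn f' = (List.ofFn f').take j ++ f' j :: (List.ofFn f').drop (j + 1) := by
    conv_lhs => rw [← List.take_append_drop (j : ℕ) (List.ofFn f')]
    congr 1
    rw [List.drop_eq_getElem_cons hlen']
    congr 1
    simp
  have htake : (List.ofFn f).take j = (List.ofFn f').take j := by
    apply List.ext_getElem
    · simp
    · intro i hi1 hi2
      rw [List.getElem_take, List.getElem_take]
      have hij : i < (j : ℕ) := by simp at hi1; omega
      have hin : i < n := by omega
      rw [List.getElem_ofFn, List.getElem_ofFn]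
      exact hagree ⟨i, hin⟩ hij
  rw [h1, h2, ← htake]
  exact List.Lex.append_left _ (List.Lex.rel hlt) _

section Xfer
variable {α : Type*} [Fintype α] [DecidableEq α] {n : ℕ}

/-- Move the items of `T` from bundle `s` to bundle `r`. -/
def xfer (Y : Fin n → Finset α) (s r : Fin n) (T : Finset α) : Fin n → Finset α :=
  fun i => if i = s then Y s \ T else if i = r then Y r ∪ T else Y i

variable {Y : Fin n → Finset α} {s r : Fin n} {T : Finset α}

lemma xfer_s (hsr : s ≠ r) : xfer Y s r T s = Y s \ T := by simp [xfer]

lemma xfer_r (hsr : s ≠ r) : xfer Y s r T r = Y r ∪ T := by simp [xfer, hsr.symm]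

lemma xfer_other {i : Fin n} (his : i ≠ s) (hir : i ≠ r) : xfer Y s r T i = Y i := by
  simp [xfer, his, hir]

lemma xfer_sub {i : Fin n} (hir : i ≠ r) : xfer Y s r T i ⊆ Y i := by
  unfold xfer
  split_ifs with h1
  · subst h1; exact Finset.sdiff_subset
  · exact subset_rfl

lemma xfer_complete (hY : CompleteAlloc Y) (hsr : s ≠ r) (hT : T ⊆ Y s) :
    CompleteAlloc (xfer Y s r T) := by
  obtain ⟨hD, hC⟩ := hY
  have main : ∀ j : Fin n, r ≠ j → Disjoint (xfer Y s r T r) (xfer Y s r T j) := by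
    intro j hrj
    rw [xfer_r hsr]
    by_cases hjs : j = s
    · subst hjs
      rw [xfer_s hsr]
      exact Finset.disjoint_union_left.mpr
        ⟨(hD r j hrj).mono_right Finset.sdiff_subset, Finset.sdiff_disjoint.symm⟩
    · rw [xfer_other (Ne.symm (fun h => hjs h.symm)) (Ne.symm hrj)]
      exact Finset.disjoint_union_left.mpr
        ⟨hD r j hrj, (hD s j (fun h => hjs h.symm)).mono_left hT⟩
  constructor
  · intro i j hij
    by_cases hir : i = r
    · subst hir; exact main j hij
    · by_cases hjr : j = r
      · subst hjr; exact (main i (Ne.symm hij)).symm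
      · exact (hD i j hij).mono (xfer_sub hir) (xfer_sub hjr)
  · apply Finset.eq_univ_of_forall
    intro x
    have hx : x ∈ Finset.univ.biUnion Y := by rw [hC]; exact Finset.mem_univ x
    rw [Finset.mem_biUnion] at hx ⊢
    obtain ⟨i, _, hxi⟩ := hx
    by_cases his : i = s
    · subst his
      by_cases hxT : x ∈ T
      · exact ⟨r, Finset.mem_univ r, by rw [xfer_r hsr]; exact Finset.mem_union_right _ hxT⟩
      · exact ⟨i, Finset.mem_univ i, by rw [xfer_s hsr]; exact Finset.mem_sdiff.mpr ⟨hxi, hxT⟩⟩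
    · by_cases hir : i = r
      · subst hir
        exact ⟨i, Finset.mem_univ i, by rw [xfer_r hsr]; exact Finset.mem_union_left _ hxi⟩
      · exact ⟨i, Finset.mem_univ i, by rw [xfer_other his hir]; exact hxi⟩
end Xfer

section UtilLemmas
variable {α : Type*} [DecidableEq α]

lemma util_eq (w : α → ℤ) (c : ℕ) (hc : 0 < c) (hw : ∀ o, w o ∈ ({-1, 0, (c : ℤ)} : Set ℤ))
    (S : Finset α) :
    util w S = (c : ℤ) * (S.filter fun o => w o = (c:ℤ)).card
      - (S.filter fun o => w o = -1).card := by
  classical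
  rw [util, ← Finset.sum_filter_add_sum_filter_not S (fun o => w o = (c:ℤ))]
  have h1 : ∑ o ∈ S.filter (fun o => w o = (c:ℤ)), w o
      = (c : ℤ) * (S.filter fun o => w o = (c:ℤ)).card := by
    rw [Finset.sum_congr rfl (fun o ho => (Finset.mem_filter.mp ho).2)]
    simp [mul_comm]
  have hsplit : S.filter (fun o => ¬ w o = (c:ℤ))
      = (S.filter fun o => w o = -1) ∪ (S.filter fun o => w o = 0) := by
    ext o
    simp only [Finset.mem_filter, Finset.mem_union]
    have := hw o
    simp only [Set.mem_insert_iff, Set.mem_singleton_iff] at this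
    constructor
    · rintro ⟨h, h2⟩; rcases this with h3|h3|h3 <;> tauto
    · rintro (⟨h,h2⟩|⟨h,h2⟩) <;> constructor <;> first | exact h | omega
  have hdisj : Disjoint (S.filter fun o => w o = -1) (S.filter fun o => w o = 0) := by
    rw [Finset.disjoint_filter]
    intro o _ h1 h2
    omega
  rw [h1, hsplit, Finset.sum_union hdisj]
  have h2 : ∑ o ∈ S.filter (fun o => w o = -1), w o
      = -((S.filter fun o => w o = -1).card : ℤ) := by
    rw [Finset.sum_congr rfl (fun o ho => (Finset.mem_filter.mp ho).2)]
    simp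
  have h3 : ∑ o ∈ S.filter (fun o => w o = 0), w o = 0 := by
    rw [Finset.sum_congr rfl (fun o ho => (Finset.mem_filter.mp ho).2)]
    simp
  rw [h2, h3]
  ring

lemma util_sdiff {w : α → ℤ} {A T : Finset α} (hT : T ⊆ A) :
    util w (A \ T) = util w A - util w T := by
  have h := Finset.sum_sdiff hT (f := w)
  unfold util at *
  omega

lemma util_union {w : α → ℤ} {A T : Finset α} (hd : Disjoint A T) :
    util w (A ∪ T) = util w A + util w T :=
  Finset.sum_union hd

lemma card_filter_sdiff {A T : Finset α} (p : α → Prop) [DecidablePred p] (hT : T ⊆ A) :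
    ((A \ T).filter p).card + (T.filter p).card = (A.filter p).card := by
  have h : (A \ T).filter p = A.filter p \ T.filter p := by
    ext x
    simp only [Finset.mem_filter, Finset.mem_sdiff]
    tauto
  rw [h]
  exact Finset.card_sdiff_add_card_eq_card (Finset.filter_subset_filter _ hT)

lemma card_filter_union {A T : Finset α} (p : α → Prop) [DecidablePred p] (hd : Disjoint A T) :
    ((A ∪ T).filter p).card = (A.filter p).card + (T.filter p).card := by
  rw [Finset.filter_union]
  exact Finset.card_union_of_disjoint
    (hd.mono (Finset.filter_subset _ _) (Finset.filter_subset _ _))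

end UtilLemmas
end Helpers
/-- with `{-1, 0, c}`-additive valuations, let `Y` be a dominating leximin
allocation for the auxiliary instance where all `n` agents share agent `i`'s valuation
`w`, with the last agent having minimal utility. With `N' = {j : |Y^c_j| = |Y^c_n| + 1}`
and `ℓ` the number of items valued `-1`, we get `|Y^{-1}_n| = max(⌈(ℓ - c|N'|)/n⌉, 0)`,
and the maxmin share is at most `c|Y^c_n| - max(⌈(ℓ - c|N'|)/n⌉, 0)`. -/
theorem dominating_leximin_mms_upper_bound {α : Type*} [Fintype α] [DecidableEq α]
    (n : ℕ) (hn : 0 < n) (c : ℕ) (hc : 0 < c) (w : α → ℤ)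
    (hw : ∀ o, w o ∈ ({-1, 0, (c : ℤ)} : Set ℤ))
    (Y : Fin n → Finset α)
    (hYlex : LeximinAux w Y)
    (hYdom : ∀ Z : Fin n → Finset α, LeximinAux w Z → ¬ Dominates w c Z Y)
    (last : Fin n) (hlast : (last : ℕ) = n - 1)
    (hmin : ∀ j : Fin n, util w (Y last) ≤ util w (Y j))
    (N' : Finset (Fin n))
    (hN' : N' = Finset.univ.filter fun j => (cPart w c Y j).card = (cPart w c Y last).card + 1)
    (ℓ : ℕ) (hℓ : ℓ = (Finset.univ.filter fun o : α => w o = -1).card) :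
    ((mPart w Y last).card : ℤ)
        = max ⌈((((ℓ : ℤ) - (c : ℤ) * N'.card : ℤ)) : ℚ) / (n : ℚ)⌉ 0 ∧
    (∀ P : Fin n → Finset α, CompleteAlloc P →
      ∃ j : Fin n, util w (P j) ≤
        (c : ℤ) * (cPart w c Y last).card
          - max ⌈((((ℓ : ℤ) - (c : ℤ) * N'.card : ℤ)) : ℚ) / (n : ℚ)⌉ 0) := by
  classical
  obtain ⟨hYc', hYlex2⟩ := hYlex
  obtain ⟨hYd, hYcov⟩ := hYc'
  have hYc : CompleteAlloc Y := ⟨hYd, hYcov⟩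
  have hC1 : (1 : ℤ) ≤ (c : ℤ) := by exact_mod_cast hc
  have hC0 : (0 : ℤ) < (c : ℤ) := by omega
  -- utility decomposition
  have hu : ∀ i : Fin n, util w (Y i)
      = (c : ℤ) * ((cPart w c Y i).card : ℤ) - ((mPart w Y i).card : ℤ) := by
    intro i
    exact util_eq w c hc hw (Y i)
  -- basic exchange-based contradiction with leximin optimality
  have contra : ∀ (s r : Fin n), s ≠ r → ∀ T : Finset α, T ⊆ Y s →
      (s = last ∨ r = last) →
      util w (Y last) < util w (Y s) - util w T →
      util w (Y last) < util w (Y r) + util w T → False := by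
    intro s r hsr T hT hmem h1 h2
    have hZc : CompleteAlloc (xfer Y s r T) := xfer_complete hYc hsr hT
    apply hYlex2 (xfer Y s r T) hZc
    have hfs : util w (xfer Y s r T s) = util w (Y s) - util w T := by
      rw [xfer_s hsr]; exact util_sdiff hT
    have hfr : util w (xfer Y s r T r) = util w (Y r) + util w T := by
      rw [xfer_r hsr]
      exact util_union ((hYd s r hsr).symm.mono_right hT)
    have hoth : ∀ i, i ≠ s → i ≠ r → util w (xfer Y s r T i) = util w (Y i) := by
      intro i hi1 hi2; rw [xfer_other hi1 hi2]
    unfold sUtil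
    rcases hmem with rfl | rfl
    · exact exchange_lex (fun i => util w (Y i)) (fun i => util w (xfer Y s r T i))
        s r hsr (util w (Y s)) rfl (hmin r) (by beta_reduce; rw [hfs]; exact h1)
        (by beta_reduce; rw [hfr]; exact h2) hoth
    · exact exchange_lex (fun i => util w (Y i)) (fun i => util w (xfer Y s r T i))
        r s hsr.symm (util w (Y r)) rfl (hmin s) (by beta_reduce; rw [hfr]; exact h2)
        (by beta_reduce; rw [hfs]; exact h1) (fun i hi1 hi2 => hoth i hi2 hi1)
  -- if the last bundle contains a bad item, no bundle can exceed the minimum by 2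
  have push : ∀ j : Fin n, 1 ≤ (mPart w Y last).card →
      util w (Y last) + 1 < util w (Y j) → False := by
    intro j hm hgt
    have hjl : last ≠ j := by
      rintro rfl; omega
    obtain ⟨o, ho⟩ := Finset.card_pos.mp hm
    have hoY : o ∈ Y last := Finset.mem_of_mem_filter o ho
    have hwo : w o = -1 := (Finset.mem_filter.mp ho).2
    have hTsub : ({o} : Finset α) ⊆ Y last := Finset.singleton_subset_iff.mpr hoY
    have hTu : util w ({o} : Finset α) = -1 := by
      rw [util, Finset.sum_singleton, hwo]
    exact contra last j hjl {o} hTsub (Or.inl rfl)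
      (by rw [hTu]; omega) (by rw [hTu]; omega)
  -- helper facts about T = insert o D
  have hTfacts : ∀ (s : Fin n) (o : α) (D : Finset α), o ∈ cPart w c Y s →
      D ⊆ mPart w Y s → D.card = c →
      (insert o D ⊆ Y s) ∧ util w (insert o D) = 0 ∧
      ((insert o D).filter fun x => w x = (c:ℤ)) = {o} ∧
      ((insert o D).filter fun x => w x = -1) = D := by
    intro s o D ho hD hDc
    have hoY : o ∈ Y s := Finset.mem_of_mem_filter o ho
    have hwo : w o = (c:ℤ) := (Finset.mem_filter.mp ho).2
    have hwD : ∀ x ∈ D, w x = -1 := fun x hx => (Finset.mem_filter.mp (hD hx)).2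
    have hoD : o ∉ D := by
      intro h
      have := hwD o h
      omega
    refine ⟨?_, ?_, ?_, ?_⟩
    · exact Finset.insert_subset hoY
        (hD.trans (Finset.filter_subset _ _))
    · rw [util, Finset.sum_insert hoD, hwo]
      have : ∑ x ∈ D, w x = -(D.card : ℤ) := by
        rw [Finset.sum_congr rfl hwD]
        simp
      rw [this, hDc]
      ring
    · rw [Finset.filter_insert, if_pos hwo]
      have : D.filter (fun x => w x = (c:ℤ)) = ∅ := by
        apply Finset.filter_false_of_mem
        intro x hx
        have := hwD x hx
        omega
      rw [this]
      simp
    · rw [Finset.filter_insert, if_neg (by omega)]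
      exact Finset.filter_true_of_mem hwD
  -- B2 : every bundle has at least t items of value c
  have hB2 : ∀ j : Fin n, (cPart w c Y last).card ≤ (cPart w c Y j).card := by
    by_contra hcon
    push_neg at hcon
    obtain ⟨j, hj⟩ := hcon
    have hjl : j ≠ last := by rintro rfl; omega
    have hud := hmin j
    have hdj := hu j
    have hdl := hu last
    have hAj : ((cPart w c Y j).card : ℤ) + 1 ≤ ((cPart w c Y last).card : ℤ) := by
      exact_mod_cast hj
    have hCA : (c:ℤ) * ((cPart w c Y j).card : ℤ) + (c:ℤ)
        ≤ (c:ℤ) * ((cPart w c Y last).card : ℤ) := by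
      have := mul_le_mul_of_nonneg_left hAj (le_of_lt hC0)
      linarith [this]
    have hm : ((mPart w Y j).card : ℤ) + (c:ℤ) ≤ ((mPart w Y last).card : ℤ) := by
      linarith
    have hm1 : 1 ≤ (mPart w Y last).card := by
      have h0 : (0:ℤ) ≤ ((mPart w Y j).card : ℤ) := by positivity
      have : (1:ℤ) ≤ ((mPart w Y last).card : ℤ) := by linarith
      exact_mod_cast this
    by_cases hcase : util w (Y last) + 1 < util w (Y j)
    · exact push j hm1 hcase
    · push_neg at hcase
      -- construct the utility-preserving swap
      have htpos : 0 < (cPart w c Y last).card := by omega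
      obtain ⟨o, ho⟩ := Finset.card_pos.mp htpos
      have hcm : c ≤ (mPart w Y last).card := by
        have h0 : (0:ℤ) ≤ ((mPart w Y j).card : ℤ) := by positivity
        have : (c:ℤ) ≤ ((mPart w Y last).card : ℤ) := by linarith
        exact_mod_cast this
      obtain ⟨D, hDsub, hDc⟩ := Finset.exists_subset_card_eq hcm
      obtain ⟨hT, hTu, hTc, hTm⟩ := hTfacts last o D ho hDsub hDc
      set T := insert o D with hTdef
      set Z := xfer Y last j T with hZdef
      have hjl' : last ≠ j := fun h => hjl h.symm
      have hZc : CompleteAlloc Z := xfer_complete hYc hjl' hT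
      have hZutil : ∀ i, util w (Z i) = util w (Y i) := by
        intro i
        by_cases h1 : i = last
        · subst h1
          rw [hZdef, xfer_s hjl', util_sdiff hT, hTu]
          ring
        · by_cases h2 : i = j
          · subst h2
            rw [hZdef, xfer_r hjl', util_union ((hYd last i hjl').symm.mono_right hT), hTu]
            ring
          · rw [hZdef, xfer_other h1 h2]
      have hZlex : LeximinAux w Z := by
        refine ⟨hZc, ?_⟩
        intro Z' hZ'
        have he : sUtil w Z = sUtil w Y := by
          unfold sUtil
          congr 2
          funext i
          exact hZutil i
        rw [he]
        exact hYlex2 Z' hZ'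
      -- card computations
      have hcZl : (cPart w c Z last).card + 1 = (cPart w c Y last).card := by
        have h1 : cPart w c Z last = (Y last \ T).filter (fun x => w x = (c:ℤ)) := by
          rw [cPart, hZdef, xfer_s hjl']
        have h2 := card_filter_sdiff (fun x => w x = (c:ℤ)) hT
        rw [hTc] at h2
        rw [h1]
        simpa [cPart] using h2
      have hcZj : (cPart w c Z j).card = (cPart w c Y j).card + 1 := by
        have h1 : cPart w c Z j = (Y j ∪ T).filter (fun x => w x = (c:ℤ)) := by
          rw [cPart, hZdef, xfer_r hjl']
        have h2 := card_filter_union (fun x => w x = (c:ℤ))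
          ((hYd last j hjl').symm.mono_right hT)
        rw [hTc] at h2
        rw [h1, h2]
        simp [cPart]
      have hcZo : ∀ i, i ≠ last → i ≠ j → cPart w c Z i = cPart w c Y i := by
        intro i h1 h2
        rw [cPart, hZdef, xfer_other h1 h2, cPart]
      apply hYdom Z hZlex
      by_cases hsw : (cPart w c Y j).card + 1 = (cPart w c Y last).card
      · -- pure swap of the c-counts : use the vecC tie-break
        right; left
        constructor
        · unfold sC
          congr 1
          have hfun : (fun i => (c:ℤ) * ((cPart w c Z i).card : ℤ))
              = (fun i => (c:ℤ) * ((cPart w c Y i).card : ℤ)) ∘ (Equiv.swap j last) := by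
            funext i
            by_cases h1 : i = j
            · subst h1
              simp only [Function.comp_apply, Equiv.swap_apply_left]
              congr 1
              exact_mod_cast congrArg (Nat.cast (R := ℤ)) (by omega : (cPart w c Z i).card = (cPart w c Y last).card)
            · by_cases h2 : i = last
              · subst h2
                simp only [Function.comp_apply, Equiv.swap_apply_right]
                congr 1
                exact_mod_cast congrArg (Nat.cast (R := ℤ)) (by omega : (cPart w c Z i).card = (cPart w c Y j).card)
              · simp only [Function.comp_apply, Equiv.swap_apply_of_ne_of_ne h1 h2]
                rw [hcZo i h2 h1]
          rw [hfun]
          rw [show ((fun i => (c:ℤ) * ((cPart w c Y i).card : ℤ)) ∘ (Equiv.swap j last))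
              = fun i => (c:ℤ) * ((cPart w c Y (Equiv.swap j last i)).card : ℤ) from rfl]
          calc Multiset.map (fun i => (c:ℤ) * ((cPart w c Y (Equiv.swap j last i)).card : ℤ))
                Finset.univ.val
              = Multiset.map ((fun i => (c:ℤ) * ((cPart w c Y i).card : ℤ)))
                  (Multiset.map (Equiv.swap j last) Finset.univ.val) := by
                rw [Multiset.map_map]; rfl
            _ = Multiset.map (fun i => (c:ℤ) * ((cPart w c Y i).card : ℤ)) Finset.univ.val := by
                rw [Multiset.map_univ_val_equiv]
        · unfold vecC
          apply lex_ofFn _ _ j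
          · beta_reduce
            apply mul_lt_mul_of_pos_left _ hC0
            exact_mod_cast (by omega : (cPart w c Y j).card < (cPart w c Z j).card)
          · intro i hij
            have hjlt : (j : ℕ) < (last : ℕ) := by
              have h1 : (j:ℕ) ≠ (last:ℕ) := fun h => hjl (Fin.ext h)
              have := j.isLt
              omega
            have h1 : i ≠ j := fun h => by rw [h] at hij; omega
            have h2 : i ≠ last := fun h => by
              rw [h] at hij
              omega
            beta_reduce
            rw [hcZo i h2 h1]
      · -- strictly better sC
        left
        unfold sC
        apply exchange_lex _ _ j last hjl ((c:ℤ) * ((cPart w c Y j).card : ℤ)) rfl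
        · exact mul_le_mul_of_nonneg_left (by exact_mod_cast hj.le) (le_of_lt hC0)
        · beta_reduce
          apply mul_lt_mul_of_pos_left _ hC0
          exact_mod_cast (by omega : (cPart w c Y j).card < (cPart w c Z j).card)
        · beta_reduce
          apply mul_lt_mul_of_pos_left _ hC0
          exact_mod_cast (by omega : (cPart w c Y j).card < (cPart w c Z last).card)
        · intro i h1 h2
          beta_reduce
          rw [hcZo i h2 h1]
  -- B1 : every bundle has at most t+1 items of value c
  have hB1 : ∀ j : Fin n, (cPart w c Y j).card ≤ (cPart w c Y last).card + 1 := by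
    by_contra hcon
    push_neg at hcon
    obtain ⟨j, hj⟩ := hcon
    have hjl : j ≠ last := by rintro rfl; omega
    have hud := hmin j
    have hdj := hu j
    have hdl := hu last
    have hAj : ((cPart w c Y last).card : ℤ) + 2 ≤ ((cPart w c Y j).card : ℤ) := by
      exact_mod_cast hj
    have hCA : (c:ℤ) * ((cPart w c Y last).card : ℤ) + 2 * (c:ℤ)
        ≤ (c:ℤ) * ((cPart w c Y j).card : ℤ) := by
      have := mul_le_mul_of_nonneg_left hAj (le_of_lt hC0)
      linarith [this]
    by_cases hcase : util w (Y last) + (c:ℤ) < util w (Y j)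
    · -- move one c-item from j to last
      have hapos : 0 < (cPart w c Y j).card := by omega
      obtain ⟨o, ho⟩ := Finset.card_pos.mp hapos
      have hoY : o ∈ Y j := Finset.mem_of_mem_filter o ho
      have hwo : w o = (c:ℤ) := (Finset.mem_filter.mp ho).2
      have hTsub : ({o} : Finset α) ⊆ Y j := Finset.singleton_subset_iff.mpr hoY
      have hTu : util w ({o} : Finset α) = (c:ℤ) := by
        rw [util, Finset.sum_singleton, hwo]
      exact contra j last hjl {o} hTsub (Or.inr rfl)
        (by rw [hTu]; omega) (by rw [hTu]; omega)
    · push_neg at hcase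
      have hbj : (c:ℤ) ≤ ((mPart w Y j).card : ℤ) := by linarith
      have hcm : c ≤ (mPart w Y j).card := by exact_mod_cast hbj
      have hapos : 0 < (cPart w c Y j).card := by omega
      obtain ⟨o, ho⟩ := Finset.card_pos.mp hapos
      obtain ⟨D, hDsub, hDc⟩ := Finset.exists_subset_card_eq hcm
      obtain ⟨hT, hTu, hTc, hTm⟩ := hTfacts j o D ho hDsub hDc
      set T := insert o D with hTdef
      set Z := xfer Y j last T with hZdef
      have hZc : CompleteAlloc Z := xfer_complete hYc hjl hT
      have hZutil : ∀ i, util w (Z i) = util w (Y i) := by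
        intro i
        by_cases h1 : i = j
        · subst h1
          rw [hZdef, xfer_s hjl, util_sdiff hT, hTu]
          ring
        · by_cases h2 : i = last
          · subst h2
            rw [hZdef, xfer_r hjl, util_union ((hYd j i hjl).symm.mono_right hT), hTu]
            ring
          · rw [hZdef, xfer_other h1 h2]
      have hZlex : LeximinAux w Z := by
        refine ⟨hZc, ?_⟩
        intro Z' hZ'
        have he : sUtil w Z = sUtil w Y := by
          unfold sUtil
          congr 2
          funext i
          exact hZutil i
        rw [he]
        exact hYlex2 Z' hZ'
      have hcZj : (cPart w c Z j).card + 1 = (cPart w c Y j).card := by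
        have h1 : cPart w c Z j = (Y j \ T).filter (fun x => w x = (c:ℤ)) := by
          rw [cPart, hZdef, xfer_s hjl]
        have h2 := card_filter_sdiff (fun x => w x = (c:ℤ)) hT
        rw [hTc] at h2
        rw [h1]
        simpa [cPart] using h2
      have hcZl : (cPart w c Z last).card = (cPart w c Y last).card + 1 := by
        have h1 : cPart w c Z last = (Y last ∪ T).filter (fun x => w x = (c:ℤ)) := by
          rw [cPart, hZdef, xfer_r hjl]
        have h2 := card_filter_union (fun x => w x = (c:ℤ))
          ((hYd j last hjl).symm.mono_right hT)
        rw [hTc] at h2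
        rw [h1, h2]
        simp [cPart]
      have hcZo : ∀ i, i ≠ j → i ≠ last → cPart w c Z i = cPart w c Y i := by
        intro i h1 h2
        rw [cPart, hZdef, xfer_other h1 h2, cPart]
      apply hYdom Z hZlex
      left
      unfold sC
      apply exchange_lex _ _ last j hjl.symm ((c:ℤ) * ((cPart w c Y last).card : ℤ)) rfl
      · exact mul_le_mul_of_nonneg_left (by exact_mod_cast (by omega : (cPart w c Y last).card ≤ (cPart w c Y j).card)) (le_of_lt hC0)
      · apply mul_lt_mul_of_pos_left _ hC0
        exact_mod_cast (by omega : (cPart w c Y last).card < (cPart w c Z last).card)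
      · apply mul_lt_mul_of_pos_left _ hC0
        exact_mod_cast (by omega : (cPart w c Y last).card < (cPart w c Z j).card)
      · intro i h1 h2
        beta_reduce
        rw [hcZo i h2 h1]
  -- C3 : if the last bundle has a bad item, utilities are within 1 of the minimum
  have hC3 : 1 ≤ (mPart w Y last).card → ∀ j, util w (Y j) ≤ util w (Y last) + 1 := by
    intro hm j
    by_contra h
    push_neg at h
    exact push j hm h
  -- the bad items are partitioned among the bundles
  have hsum : ∑ j : Fin n, (mPart w Y j).card = ℓ := by
    have h1 : (Finset.univ.filter fun o : α => w o = -1)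
        = Finset.univ.biUnion (fun j => mPart w Y j) := by
      rw [← hYcov, Finset.filter_biUnion]
      rfl
    rw [hℓ, h1, Finset.card_biUnion]
    intro i _ j _ hij
    exact (hYd i j hij).mono (Finset.filter_subset _ _) (Finset.filter_subset _ _)
  -- membership facts for N'
  have hmemN' : ∀ j, j ∈ N' ↔ (cPart w c Y j).card = (cPart w c Y last).card + 1 := by
    intro j
    rw [hN']
    simp
  have hlastN' : last ∉ N' := by
    rw [hmemN' last]
    omega
  have haN : ∀ j, j ∉ N' → (cPart w c Y j).card = (cPart w c Y last).card := by
    intro j hjn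
    rw [hmemN' j] at hjn
    have := hB1 j
    have := hB2 j
    omega
  -- per-bundle bounds on the number of bad items
  have hBub : ∀ j ∈ N', ((mPart w Y j).card : ℤ) ≤ ((mPart w Y last).card : ℤ) + c := by
    intro j hjn
    have hud := hmin j
    have hdj := hu j
    have hdl := hu last
    have haj : ((cPart w c Y j).card : ℤ) = ((cPart w c Y last).card : ℤ) + 1 := by
      exact_mod_cast (hmemN' j).mp hjn
    rw [haj] at hdj
    nlinarith [hdj, hdl, hud]
  have hBub' : ∀ j ∉ N', ((mPart w Y j).card : ℤ) ≤ ((mPart w Y last).card : ℤ) := by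
    intro j hjn
    have hud := hmin j
    have hdj := hu j
    have hdl := hu last
    have haj : ((cPart w c Y j).card : ℤ) = ((cPart w c Y last).card : ℤ) := by
      exact_mod_cast haN j hjn
    rw [haj] at hdj
    linarith
  have hBlb : 1 ≤ (mPart w Y last).card →
      ∀ j ∈ N', ((mPart w Y last).card : ℤ) + c - 1 ≤ ((mPart w Y j).card : ℤ) := by
    intro hm j hjn
    have hud := hC3 hm j
    have hdj := hu j
    have hdl := hu last
    have haj : ((cPart w c Y j).card : ℤ) = ((cPart w c Y last).card : ℤ) + 1 := by
      exact_mod_cast (hmemN' j).mp hjn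
    rw [haj] at hdj
    nlinarith [hdj, hdl, hud]
  have hBlb' : 1 ≤ (mPart w Y last).card →
      ∀ j ∉ N', ((mPart w Y last).card : ℤ) - 1 ≤ ((mPart w Y j).card : ℤ) := by
    intro hm j hjn
    have hud := hC3 hm j
    have hdj := hu j
    have hdl := hu last
    have haj : ((cPart w c Y j).card : ℤ) = ((cPart w c Y last).card : ℤ) := by
      exact_mod_cast haN j hjn
    rw [haj] at hdj
    linarith
  -- sum manipulations
  have hsumZ : (ℓ : ℤ) = ∑ j : Fin n, ((mPart w Y j).card : ℤ) := by
    rw [← hsum]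
    push_cast
    rfl
  have hsplit : ∑ j : Fin n, ((mPart w Y j).card : ℤ)
      = (∑ j ∈ N', ((mPart w Y j).card : ℤ))
        + ∑ j ∈ Finset.univ \ N', ((mPart w Y j).card : ℤ) := by
    rw [add_comm]
    exact (Finset.sum_sdiff (Finset.subset_univ N')).symm
  have hcard_sdiff : (Finset.univ \ N').card = n - N'.card := by
    rw [Finset.card_sdiff_of_subset (Finset.subset_univ N')]
    simp
  have hKn : N'.card ≤ n := by
    have := Finset.card_le_card (Finset.subset_univ N')
    simpa using this
  -- upper bound : ℓ ≤ n*m + c*|N'|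
  have hup : (ℓ : ℤ) ≤ (n : ℤ) * ((mPart w Y last).card : ℤ) + (c:ℤ) * N'.card := by
    rw [hsumZ, hsplit]
    have h1 : ∑ j ∈ N', ((mPart w Y j).card : ℤ)
        ≤ ∑ _j ∈ N', (((mPart w Y last).card : ℤ) + c) :=
      Finset.sum_le_sum hBub
    have h2 : ∑ j ∈ Finset.univ \ N', ((mPart w Y j).card : ℤ)
        ≤ ∑ _j ∈ Finset.univ \ N', ((mPart w Y last).card : ℤ) :=
      Finset.sum_le_sum (fun j hj => hBub' j (Finset.mem_sdiff.mp hj).2)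
    rw [Finset.sum_const] at h1
    rw [Finset.sum_const] at h2
    rw [hcard_sdiff] at h2
    have hcast : ((n - N'.card : ℕ) : ℤ) = (n:ℤ) - N'.card := by
      omega
    have h2' : ∑ j ∈ Finset.univ \ N', ((mPart w Y j).card : ℤ)
        ≤ ((n:ℤ) - N'.card) * ((mPart w Y last).card : ℤ) := by
      rw [nsmul_eq_mul, hcast] at h2
      exact h2
    have h1' : ∑ j ∈ N', ((mPart w Y j).card : ℤ)
        ≤ (N'.card : ℤ) * (((mPart w Y last).card : ℤ) + c) := by
      rw [nsmul_eq_mul] at h1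
      exact h1
    nlinarith [h1', h2']
  -- lower bound when m ≥ 1 : n*(m-1) + c*|N'| < ℓ
  have hlo : 1 ≤ (mPart w Y last).card →
      (n : ℤ) * (((mPart w Y last).card : ℤ) - 1) + (c:ℤ) * N'.card < (ℓ : ℤ) := by
    intro hm
    rw [hsumZ, hsplit]
    have h1 : ∑ _j ∈ N', (((mPart w Y last).card : ℤ) + c - 1)
        ≤ ∑ j ∈ N', ((mPart w Y j).card : ℤ) :=
      Finset.sum_le_sum (hBlb hm)
    have hlastmem : last ∈ Finset.univ \ N' := Finset.mem_sdiff.mpr ⟨Finset.mem_univ _, hlastN'⟩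
    have h2 : ∑ j ∈ Finset.univ \ N', ((mPart w Y j).card : ℤ)
        = ((mPart w Y last).card : ℤ)
          + ∑ j ∈ (Finset.univ \ N').erase last, ((mPart w Y j).card : ℤ) :=
      (Finset.add_sum_erase _ _ hlastmem).symm
    have h3 : ∑ _j ∈ (Finset.univ \ N').erase last, (((mPart w Y last).card : ℤ) - 1)
        ≤ ∑ j ∈ (Finset.univ \ N').erase last, ((mPart w Y j).card : ℤ) :=
      Finset.sum_le_sum (fun j hj => hBlb' hm j (Finset.mem_sdiff.mp (Finset.mem_of_mem_erase hj)).2)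
    rw [Finset.sum_const] at h1 h3
    rw [Finset.card_erase_of_mem hlastmem, hcard_sdiff] at h3
    rw [nsmul_eq_mul] at h1 h3
    have hc1 : ((n - N'.card - 1 : ℕ) : ℤ) = (n:ℤ) - N'.card - 1 := by
      have hlastcard : (last : ℕ) < n := last.isLt
      have : N'.card < n := by
        by_contra hh
        push_neg at hh
        have : N' = Finset.univ := Finset.eq_univ_of_card _ (by rw [Fintype.card_fin]; omega)
        rw [this] at hlastN'
        exact hlastN' (Finset.mem_univ _)
      omega
    rw [hc1] at h3
    have hmz : (1:ℤ) ≤ ((mPart w Y last).card : ℤ) := by exact_mod_cast hm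
    have key : (n:ℤ) * (((mPart w Y last).card : ℤ) - 1) + (c:ℤ) * N'.card + 1
        = (N'.card:ℤ) * (((mPart w Y last).card : ℤ) + c - 1)
          + ((n:ℤ) - N'.card - 1) * (((mPart w Y last).card : ℤ) - 1)
          + ((mPart w Y last).card : ℤ) := by ring
    linarith [h1, h2, h3, key]
  -- the first conclusion
  have main : ((mPart w Y last).card : ℤ)
      = max ⌈((((ℓ : ℤ) - (c : ℤ) * N'.card : ℤ)) : ℚ) / (n : ℚ)⌉ 0 := by
    have hnQ : (0 : ℚ) < (n : ℚ) := by exact_mod_cast hn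
    rcases Nat.eq_zero_or_pos (mPart w Y last).card with hm0 | hm1
    · have hnum : (ℓ : ℤ) - (c : ℤ) * N'.card ≤ 0 := by
        have h := hup
        rw [hm0] at h
        push_cast at h
        linarith
      have hq : ((((ℓ : ℤ) - (c : ℤ) * N'.card : ℤ)) : ℚ) / (n : ℚ) ≤ 0 := by
        apply div_nonpos_of_nonpos_of_nonneg _ (le_of_lt hnQ)
        exact_mod_cast hnum
      have hle : ⌈((((ℓ : ℤ) - (c : ℤ) * N'.card : ℤ)) : ℚ) / (n : ℚ)⌉ ≤ 0 := by
        rw [Int.ceil_le]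
        exact_mod_cast hq
      rw [max_eq_right hle, hm0]
      simp
    · have hub : ((((ℓ : ℤ) - (c : ℤ) * N'.card : ℤ)) : ℚ) / (n : ℚ)
          ≤ (((mPart w Y last).card : ℤ) : ℚ) := by
        rw [div_le_iff₀ hnQ]
        have h : ((ℓ : ℤ) - (c : ℤ) * N'.card) ≤ ((mPart w Y last).card : ℤ) * n := by
          linarith [hup]
        exact_mod_cast h
      have hlb : ((((mPart w Y last).card : ℤ) - 1 : ℤ) : ℚ)
          < ((((ℓ : ℤ) - (c : ℤ) * N'.card : ℤ)) : ℚ) / (n : ℚ) := by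
        rw [lt_div_iff₀ hnQ]
        have h : (((mPart w Y last).card : ℤ) - 1) * n < (ℓ : ℤ) - (c : ℤ) * N'.card := by
          have := hlo hm1
          linarith
        exact_mod_cast h
      have hceil1 : ⌈((((ℓ : ℤ) - (c : ℤ) * N'.card : ℤ)) : ℚ) / (n : ℚ)⌉
          ≤ ((mPart w Y last).card : ℤ) := Int.ceil_le.mpr hub
      have hceil2 : ((mPart w Y last).card : ℤ) - 1
          < ⌈((((ℓ : ℤ) - (c : ℤ) * N'.card : ℤ)) : ℚ) / (n : ℚ)⌉ := Int.lt_ceil.mpr hlb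
      have hmz : (1:ℤ) ≤ ((mPart w Y last).card : ℤ) := by exact_mod_cast hm1
      rw [max_eq_left (by omega)]
      omega
  refine ⟨main, ?_⟩
  -- second conclusion
  intro P hP
  by_contra hno
  push_neg at hno
  have hbound : ∀ j, util w (Y last) < util w (P j) := by
    intro j
    have h := hno j
    rw [← main] at h
    have hdl := hu last
    linarith
  exact hYlex2 P hP
    (min_lex (fun i => util w (Y i)) (fun i => util w (P i))
      (util w (Y last)) last rfl hmin hbound)
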